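/- Let φ : (M,d) → (N,ρ) be an isometric embedding between proper geodesic metric spaces with basepoint b ∈ M. Let h and h' be Busemann points of (M,d), let (z^n) and (w^n) be almost geodesic sequences with h_{z^n} → h and h_{w^n} → h' pointwise, and let g and g' be the Busemann points of (N,ρ) with basepoint φ(b) obtained as the pointwise limits of h_{φ(z^n)} and h_{φ(w^n)} respectively. Then δ(h,h') = δ(g,g'); in particular, if δ(h,h') < ∞ then δ(g,g') < ∞, so the induced map on Busemann points sends the part P(h) into the part P(g). -/

import Mathlib

open Filter Topology

noncomputable section

/-- `horo b y z = d(z,y) - d(b,y)`, the function `h_y` with basepoint `b`. -/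
def horo {M : Type*} [MetricSpace M] (b y z : M) : ℝ := dist z y - dist b y

/-- `HoroLim b y h` : the functions `h_{y^n}` (with basepoint `b`) converge pointwise to `h`. -/
def HoroLim {M : Type*} [MetricSpace M] (b : M) (y : ℕ → M) (h : M → ℝ) : Prop :=
  ∀ z : M, Filter.Tendsto (fun n => horo b (y n) z) Filter.atTop (nhds (h z))

/-- `h` is a horofunction of `(M,d)` with basepoint `b`. -/
def IsHorofunction {M : Type*} [MetricSpace M] (b : M) (h : M → ℝ) : Prop :=
  (∃ y : ℕ → M, HoroLim b y h) ∧ ∀ y : M, h ≠ horo b y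

/-- A metric space is geodesic: any two points are joined by a geodesic path. -/
def IsGeodesicSpace (M : Type*) [MetricSpace M] : Prop :=
  ∀ x y : M, ∃ γ : ℝ → M, γ 0 = x ∧ γ (dist x y) = y ∧
    ∀ s ∈ Set.Icc (0 : ℝ) (dist x y), ∀ t ∈ Set.Icc (0 : ℝ) (dist x y),
      dist (γ s) (γ t) = |s - t|

/-- Almost geodesic sequence. -/
def IsAlmostGeodesicSeq {M : Type*} [MetricSpace M] (y : ℕ → M) : Prop :=
  Filter.Tendsto (fun n => dist (y n) (y 0)) Filter.atTop Filter.atTop ∧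
  ∀ ε > (0 : ℝ), ∃ N : ℕ, ∀ m k : ℕ, N ≤ k → k ≤ m →
    dist (y m) (y k) + dist (y k) (y 0) - dist (y m) (y 0) < ε

/-- A Busemann point: a horofunction that is the limit of an almost geodesic sequence. -/
def IsBusemannPoint {M : Type*} [MetricSpace M] (b : M) (h : M → ℝ) : Prop :=
  IsHorofunction b h ∧ ∃ y : ℕ → M, IsAlmostGeodesicSeq y ∧ HoroLim b y h

/-- Detour cost `H(h₁,h₂)`, with values in `EReal` (so it may be `⊤ = ∞`). -/
def detourCost {M : Type*} [MetricSpace M] (b : M) (h₁ h₂ : M → ℝ) : EReal :=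
  ⨅ z : {z : ℕ → M // HoroLim b z h₁},
    Filter.liminf (fun n => ((dist b (z.1 n) + h₂ (z.1 n) : ℝ) : EReal)) Filter.atTop

/-- Detour distance `δ(h₁,h₂) = H(h₁,h₂) + H(h₂,h₁)`. -/
def detourDist {M : Type*} [MetricSpace M] (b : M) (h₁ h₂ : M → ℝ) : EReal :=
  detourCost b h₁ h₂ + detourCost b h₂ h₁

/-- A pointwise limit of the 1-Lipschitz functions `horo b (y n)` is 1-Lipschitz. -/
lemma horoLim_lip {M : Type*} [MetricSpace M] (b : M) (y : ℕ → M) (h : M → ℝ)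
    (hy : HoroLim b y h) : ∀ x x' : M, h x ≤ h x' + dist x x' := by
  intro x x'
  refine le_of_tendsto_of_tendsto' (hy x) ((hy x').add tendsto_const_nhds) fun n => ?_
  simp only [horo]
  have := dist_triangle x x' (y n)
  linarith

lemma ereal_le_of_forall_add {L R : EReal} (H : ∀ ε : ℝ, 0 < ε → L ≤ R + (ε : EReal)) :
    L ≤ R := by
  rw [← EReal.le_of_forall_lt_iff_le]
  intro c hc
  induction R with
  | bot => simpa using (H 1 one_pos).trans_lt (by simp [EReal.bot_add] : (⊥:EReal) + 1 < c) |>.le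
  | coe r =>
      have hrc : r < c := by exact_mod_cast hc
      have := H (c - r) (by linarith)
      calc L ≤ (r : EReal) + ((c - r : ℝ) : EReal) := this
        _ = (c : EReal) := by rw [← EReal.coe_add]; norm_num
  | top => exact absurd hc (by simp)

/-- The detour cost from a Busemann point can be computed along the defining
almost geodesic sequence. -/
lemma detourCost_eq {M : Type*} [MetricSpace M] (b : M) (z : ℕ → M)
    (hz : IsAlmostGeodesicSeq z) (h₁ h₂ : M → ℝ) (hz1 : HoroLim b z h₁)
    (lip : ∀ x x' : M, h₂ x ≤ h₂ x' + dist x x') :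
    detourCost b h₁ h₂ =
      Filter.liminf (fun n => ((dist b (z n) + h₂ (z n) : ℝ) : EReal)) Filter.atTop := by
  unfold detourCost
  apply le_antisymm
  · exact iInf_le _ (⟨z, hz1⟩ : {z : ℕ → M // HoroLim b z h₁})
  · apply le_iInf
    rintro ⟨z', hz'⟩
    set R : EReal := Filter.liminf (fun n => ((dist b (z' n) + h₂ (z' n) : ℝ) : EReal))
      Filter.atTop with hR
    -- Step A : a k := dist b (z k) + h₁ (z k) → 0
    set a : ℕ → ℝ := fun k => dist b (z k) + h₁ (z k) with ha
    have haf : ∀ k, Tendsto (fun m => dist b (z k) + (dist (z k) (z m) - dist b (z m)))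
        atTop (nhds (a k)) := fun k => tendsto_const_nhds.add (hz1 (z k))
    have hnn : ∀ k, 0 ≤ a k := by
      intro k
      refine ge_of_tendsto (haf k) (Eventually.of_forall fun m => ?_)
      have := dist_triangle b (z k) (z m)
      linarith
    have hgl : Tendsto (fun m => dist b (z m) - dist (z 0) (z m)) atTop (nhds (-h₁ (z 0))) := by
      have := (hz1 (z 0)).neg
      simp only [horo] at this ⊢
      convert this using 2 with m
      ring
    have ha0 : Tendsto a atTop (nhds 0) := by
      rw [tendsto_order]
      constructor
      · intro c hc
        exact Eventually.of_forall fun k => lt_of_lt_of_le hc (hnn k)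
      · intro c hc
        obtain ⟨N, hN⟩ := hz.2 (c / 2) (by linarith)
        have h2 : Tendsto (fun k => (dist b (z k) - dist (z 0) (z k)) + h₁ (z 0)) atTop
            (nhds 0) := by
          have := hgl.add (tendsto_const_nhds (x := h₁ (z 0)))
          simpa using this
        have h3 : ∀ᶠ k in atTop,
            (dist b (z k) - dist (z 0) (z k)) + h₁ (z 0) < c / 2 :=
          h2.eventually_lt_const (by linarith)
        filter_upwards [h3, eventually_ge_atTop N] with k hk hkN
        have key : a k ≤ (dist b (z k) - dist (z 0) (z k)) + h₁ (z 0) + c / 2 := by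
          refine le_of_tendsto_of_tendsto (haf k)
            (((tendsto_const_nhds.sub tendsto_const_nhds).add (hz1 (z 0))).add
              (tendsto_const_nhds : Tendsto (fun _ : ℕ => c / 2) atTop (nhds (c / 2)))) ?_
          filter_upwards [eventually_ge_atTop k] with m hm
          have h4 := hN m k hkN hm
          simp only [horo]
          have e1 := dist_comm (z k) (z m)
          have e2 := dist_comm (z 0) (z m)
          have e3 := dist_comm (z 0) (z k)
          linarith
        exact key.trans_lt (by linarith)
    -- Step B : each h₂(z k) - h₁(z k) is a lower bound for R
    have hB : ∀ k, ((h₂ (z k) - h₁ (z k) : ℝ) : EReal) ≤ R := by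
      intro k
      have hc : Tendsto (fun n => (h₂ (z k) - (dist (z k) (z' n) - dist b (z' n)) : ℝ))
          atTop (nhds (h₂ (z k) - h₁ (z k))) := tendsto_const_nhds.sub (hz' (z k))
      have hce : Tendsto (fun n => ((h₂ (z k) - (dist (z k) (z' n) - dist b (z' n)) : ℝ) : EReal))
          atTop (nhds ((h₂ (z k) - h₁ (z k) : ℝ) : EReal)) :=
        (continuous_coe_real_ereal.tendsto _).comp hc
      rw [← hce.liminf_eq]
      refine liminf_le_liminf (Eventually.of_forall fun n => ?_)
      have := lip (z k) (z' n)
      exact_mod_cast (by linarith : (h₂ (z k) - (dist (z k) (z' n) - dist b (z' n)) : ℝ)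
        ≤ dist b (z' n) + h₂ (z' n))
    -- Step C : conclude
    apply ereal_le_of_forall_add
    intro ε hε
    have hev : ∀ᶠ k in atTop, ((dist b (z k) + h₂ (z k) : ℝ) : EReal) ≤ R + (ε : EReal) := by
      filter_upwards [ha0.eventually_lt_const hε] with k hk
      have heq : (dist b (z k) + h₂ (z k) : ℝ) = (h₂ (z k) - h₁ (z k)) + a k := by
        simp only [ha]; ring
      calc ((dist b (z k) + h₂ (z k) : ℝ) : EReal)
          ≤ ((h₂ (z k) - h₁ (z k) + ε : ℝ) : EReal) := by
            exact_mod_cast (by rw [heq]; linarith : (dist b (z k) + h₂ (z k) : ℝ)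
              ≤ h₂ (z k) - h₁ (z k) + ε)
        _ = ((h₂ (z k) - h₁ (z k) : ℝ) : EReal) + (ε : EReal) := by rw [EReal.coe_add]
        _ ≤ R + (ε : EReal) := add_le_add_left (hB k) (ε : EReal)
    exact (liminf_le_limsup).trans (limsup_le_of_le (by isBoundedDefault) hev)

/-- the induced map on Busemann points preserves the detour distance,
and hence maps parts into parts. -/
theorem stmt_8 (M N : Type*) [MetricSpace M] [MetricSpace N]
    [ProperSpace M] [ProperSpace N]
    (hM : IsGeodesicSpace M) (hN : IsGeodesicSpace N)
    (φ : M → N) (hφ : Isometry φ) (b : M)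
    (h h' : M → ℝ) (hb : IsBusemannPoint b h) (hb' : IsBusemannPoint b h')
    (z w : ℕ → M) (hz : IsAlmostGeodesicSeq z) (hw : IsAlmostGeodesicSeq w)
    (hzh : HoroLim b z h) (hwh' : HoroLim b w h')
    (g g' : N → ℝ) (hgb : IsBusemannPoint (φ b) g) (hgb' : IsBusemannPoint (φ b) g')
    (hg : HoroLim (φ b) (fun n => φ (z n)) g)
    (hg' : HoroLim (φ b) (fun n => φ (w n)) g') :
    detourDist b h h' = detourDist (φ b) g g' ∧
      (detourDist b h h' < ⊤ → detourDist (φ b) g g' < ⊤) := by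
  -- images of almost geodesic sequences are almost geodesic
  have hza : IsAlmostGeodesicSeq (fun n => φ (z n)) := by
    refine ⟨?_, ?_⟩ <;> simp only [hφ.dist_eq] <;> [exact hz.1; exact hz.2]
  have hwa : IsAlmostGeodesicSeq (fun n => φ (w n)) := by
    refine ⟨?_, ?_⟩ <;> simp only [hφ.dist_eq] <;> [exact hw.1; exact hw.2]
  -- g and g' restrict to h and h' along φ
  have gφ : ∀ x : M, g (φ x) = h x := fun x =>
    tendsto_nhds_unique (by simpa only [horo, hφ.dist_eq] using hg (φ x)) (hzh x)
  have gφ' : ∀ x : M, g' (φ x) = h' x := fun x =>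
    tendsto_nhds_unique (by simpa only [horo, hφ.dist_eq] using hg' (φ x)) (hwh' x)
  -- Lipschitz properties of the limit functions
  have lip_h : ∀ x x' : M, h x ≤ h x' + dist x x' := horoLim_lip b z h hzh
  have lip_h' : ∀ x x' : M, h' x ≤ h' x' + dist x x' := horoLim_lip b w h' hwh'
  have lip_g : ∀ x x' : N, g x ≤ g x' + dist x x' := horoLim_lip (φ b) _ g hg
  have lip_g' : ∀ x x' : N, g' x ≤ g' x' + dist x x' := horoLim_lip (φ b) _ g' hg'
  -- the two detour costs coincide
  have e1 : detourCost b h h' = detourCost (φ b) g g' := by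
    rw [detourCost_eq b z hz h h' hzh lip_h',
      detourCost_eq (φ b) (fun n => φ (z n)) hza g g' hg lip_g']
    simp only [hφ.dist_eq, gφ']
  have e2 : detourCost b h' h = detourCost (φ b) g' g := by
    rw [detourCost_eq b w hw h' h hwh' lip_h,
      detourCost_eq (φ b) (fun n => φ (w n)) hwa g' g hg' lip_g]
    simp only [hφ.dist_eq, gφ]
  have e : detourDist b h h' = detourDist (φ b) g g' := by
    unfold detourDist
    rw [e1, e2]
  exact ⟨e, fun hlt => e ▸ hlt⟩

end
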